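/- Let X be a countable set, V : X → [1,∞), and define the V-weighted ergodicity coefficient τ_{1,V}[A] := sup over signed measures x with ‖x‖_{1,V} = 1 and xᵀe = 0 of ‖Aᵀx‖_{1,V}. Then τ_{1,V}[A] = sup_{x,y∈X} (1/(V(x)+V(y))) Σ_{z∈X} |A(x,z) − A(y,z)| V(z). -/

import Mathlib

set_option maxHeartbeats 1000000


/-- The `V`-weighted one-norm ergodicity coefficient
`τ_{1,V}[A] = sup { ‖Aᵀ m‖_{1,V} : ‖m‖_{1,V} = 1, mᵀe = 0 }` equals
`sup_{x,y} (V x + V y)⁻¹ Σ_z |A x z − A y z| V z`. -/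
theorem stmt_6 (X : Type*) [Countable X] (V : X → ℝ) (hV : ∀ x, 1 ≤ V x)
    (A : X → X → ℝ)
    (hA : ∀ x, Summable fun z => |A x z| * V z)
    (hAbdd : BddAbove (Set.range fun x => (1 / V x) * ∑' z, |A x z| * V z)) :
    sSup {r | ∃ m : X → ℝ, (∑' x, |m x| * V x) = 1 ∧ (∑' x, m x) = 0 ∧
        r = ∑' z, |∑' x, m x * A x z| * V z}
      = ⨆ x, ⨆ y, (1 / (V x + V y)) * ∑' z, |A x z - A y z| * V z := by
  classical
  have hVpos : ∀ x, 0 < V x := fun x => lt_of_lt_of_le one_pos (hV x)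
  obtain ⟨K, hK⟩ := hAbdd
  rw [mem_upperBounds] at hK
  have hK' : ∀ x, (∑' z, |A x z| * V z) ≤ K * V x := by
    intro x
    have h1 : (1 / V x) * ∑' z, |A x z| * V z ≤ K := hK _ ⟨x, rfl⟩
    rw [one_div, inv_mul_le_iff₀ (hVpos x)] at h1
    linarith [h1]
  have hAentry : ∀ x z, |A x z| ≤ K * V x := by
    intro x z
    calc |A x z| = |A x z| * 1 := (mul_one _).symm
      _ ≤ |A x z| * V z := mul_le_mul_of_nonneg_left (hV z) (abs_nonneg _)
      _ ≤ ∑' z', |A x z'| * V z' :=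
          Summable.le_tsum (hA x) z (fun _ _ => mul_nonneg (abs_nonneg _) (hVpos _).le)
      _ ≤ K * V x := hK' x
  have hΔsum : ∀ x y, Summable fun z => |A x z - A y z| * V z := by
    intro x y
    refine Summable.of_nonneg_of_le (fun z => mul_nonneg (abs_nonneg _) (hVpos z).le)
      (fun z => ?_) (((hA x).add (hA y)).congr (fun z => (add_mul _ _ _).symm))
    exact mul_le_mul_of_nonneg_right (abs_sub _ _) (hVpos z).le
  have hΔbound : ∀ x y, (∑' z, |A x z - A y z| * V z) ≤ K * V x + K * V y := by
    intro x y
    calc (∑' z, |A x z - A y z| * V z)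
        ≤ ∑' z, (|A x z| * V z + |A y z| * V z) := by
          refine Summable.tsum_le_tsum (fun z => ?_) (hΔsum x y) ((hA x).add (hA y))
          rw [← add_mul]
          exact mul_le_mul_of_nonneg_right (abs_sub _ _) (hVpos z).le
      _ = (∑' z, |A x z| * V z) + ∑' z, |A y z| * V z := Summable.tsum_add (hA x) (hA y)
      _ ≤ K * V x + K * V y := add_le_add (hK' x) (hK' y)
  rcases isEmpty_or_nonempty X with hX | hX
  · have h1 : {r | ∃ m : X → ℝ, (∑' x, |m x| * V x) = 1 ∧ (∑' x, m x) = 0 ∧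
        r = ∑' z, |∑' x, m x * A x z| * V z} = ∅ := by
      ext r
      simp only [Set.mem_setOf_eq, Set.mem_empty_iff_false, iff_false, not_exists]
      rintro m ⟨hm1, -, -⟩
      rw [tsum_empty] at hm1
      exact one_ne_zero hm1.symm
    rw [h1, Real.sSup_empty, Real.iSup_of_isEmpty]
  -- nonempty case
  have x₀ : X := Classical.arbitrary X
  have hKnn : 0 ≤ K := by
    have h0 : (0:ℝ) ≤ ∑' z, |A x₀ z| * V z :=
      tsum_nonneg fun z => mul_nonneg (abs_nonneg _) (hVpos _).le
    nlinarith [hK' x₀, hVpos x₀]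
  have hf_le : ∀ x y, (1 / (V x + V y)) * (∑' z, |A x z - A y z| * V z) ≤ K := by
    intro x y
    have hVV : (0:ℝ) < V x + V y := by linarith [hVpos x, hVpos y]
    have h2 : (1 / (V x + V y)) * (∑' z, |A x z - A y z| * V z)
        ≤ (1 / (V x + V y)) * (K * V x + K * V y) :=
      mul_le_mul_of_nonneg_left (hΔbound x y) (by positivity)
    have h3 : (1 / (V x + V y)) * (K * V x + K * V y) = K := by
      field_simp
    linarith [h2, h3 ▸ h2]
  have hbddInner : ∀ x, BddAbove (Set.range fun y =>
      (1 / (V x + V y)) * ∑' z, |A x z - A y z| * V z) := by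
    intro x
    refine ⟨K, ?_⟩
    rintro r ⟨y, rfl⟩
    exact hf_le x y
  have hbddOuter : BddAbove (Set.range fun x =>
      ⨆ y, (1 / (V x + V y)) * ∑' z, |A x z - A y z| * V z) := by
    refine ⟨K, ?_⟩
    rintro r ⟨x, rfl⟩
    exact ciSup_le fun y => hf_le x y
  set T : ℝ := ⨆ x, ⨆ y, (1 / (V x + V y)) * ∑' z, |A x z - A y z| * V z with hT
  have hfT : ∀ x y, (1 / (V x + V y)) * (∑' z, |A x z - A y z| * V z) ≤ T := by
    intro x y
    exact le_trans (le_ciSup (hbddInner x) y) (le_ciSup hbddOuter x)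
  have hTnn : 0 ≤ T := by
    have h0 : (1 / (V x₀ + V x₀)) * (∑' z, |A x₀ z - A x₀ z| * V z) = 0 := by
      simp [sub_self]
    linarith [hfT x₀ x₀, h0 ▸ hfT x₀ x₀]
  have hΔT : ∀ x y, (∑' z, |A x z - A y z| * V z) ≤ (V x + V y) * T := by
    intro x y
    have hVV : (0:ℝ) < V x + V y := by linarith [hVpos x, hVpos y]
    have := hfT x y
    rw [one_div, inv_mul_le_iff₀ hVV] at this
    linarith [this]
  -- upper bound: every element of the set is ≤ T
  have hub : ∀ r ∈ {r | ∃ m : X → ℝ, (∑' x, |m x| * V x) = 1 ∧ (∑' x, m x) = 0 ∧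
        r = ∑' z, |∑' x, m x * A x z| * V z}, r ≤ T := by
    rintro r ⟨m, hm1, hm0, rfl⟩
    have hsum1 : Summable fun x => |m x| * V x := by
      by_contra h
      rw [tsum_eq_zero_of_not_summable h] at hm1
      exact one_ne_zero hm1.symm
    have hsabs : Summable fun x => |m x| :=
      Summable.of_nonneg_of_le (fun x => abs_nonneg _)
        (fun x => le_mul_of_one_le_right (abs_nonneg _) (hV x)) hsum1
    set p : X → ℝ := fun x => max (m x) 0 with hp
    set q : X → ℝ := fun x => max (-(m x)) 0 with hq
    have hp0 : ∀ x, 0 ≤ p x := fun x => le_max_right _ _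
    have hq0 : ∀ x, 0 ≤ q x := fun x => le_max_right _ _
    have hpq_abs : ∀ x, p x + q x = |m x| := fun x =>
      max_zero_add_max_neg_zero_eq_abs_self (m x)
    have hpq_sub : ∀ x, p x - q x = m x := by
      intro x
      rcases le_total 0 (m x) with h | h
      · rw [hp, hq]
        simp only []
        rw [max_eq_left h, max_eq_right (neg_nonpos.mpr h)]
        ring
      · rw [hp, hq]
        simp only []
        rw [max_eq_right h, max_eq_left (neg_nonneg.mpr h)]
        ring
    have hple : ∀ x, p x ≤ |m x| := fun x => max_le (le_abs_self _) (abs_nonneg _)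
    have hqle : ∀ x, q x ≤ |m x| := fun x => max_le (neg_le_abs _) (abs_nonneg _)
    have hsp : Summable p := Summable.of_nonneg_of_le hp0 hple hsabs
    have hsq : Summable q := Summable.of_nonneg_of_le hq0 hqle hsabs
    have hspV : Summable fun x => p x * V x :=
      Summable.of_nonneg_of_le (fun x => mul_nonneg (hp0 x) (hVpos x).le)
        (fun x => mul_le_mul_of_nonneg_right (hple x) (hVpos x).le) hsum1
    have hsqV : Summable fun x => q x * V x :=
      Summable.of_nonneg_of_le (fun x => mul_nonneg (hq0 x) (hVpos x).le)
        (fun x => mul_le_mul_of_nonneg_right (hqle x) (hVpos x).le) hsum1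
    set c : ℝ := ∑' x, p x with hc
    have hqc : (∑' x, q x) = c := by
      have h1 : (∑' x, (p x - q x)) = 0 := by
        rw [show (fun x => p x - q x) = m from funext hpq_sub]
        exact hm0
      rw [Summable.tsum_sub hsp hsq] at h1
      linarith [h1]
    have hmne : ∃ x, m x ≠ 0 := by
      by_contra h
      push_neg at h
      rw [show (fun x => |m x| * V x) = (fun _ => (0:ℝ)) from
        funext (fun x => by rw [h x]; simp)] at hm1
      rw [tsum_zero] at hm1
      exact one_ne_zero hm1.symm
    have hcpos : 0 < c := by
      obtain ⟨x₁, hx₁⟩ := hmne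
      rcases lt_or_gt_of_ne hx₁ with h | h
      · rw [← hqc]
        exact Summable.tsum_pos hsq hq0 x₁ (by simp [hq]; linarith)
      · exact Summable.tsum_pos hsp hp0 x₁ (by simp [hp]; linarith)
    -- summability of products with A
    have hspA : ∀ z, Summable fun x => p x * A x z := by
      intro z
      refine summable_abs_iff.mp ?_
      refine Summable.of_nonneg_of_le (fun x => abs_nonneg _) (fun x => ?_)
        (hspV.mul_left K)
      rw [abs_mul, abs_of_nonneg (hp0 x)]
      calc p x * |A x z| ≤ p x * (K * V x) :=
            mul_le_mul_of_nonneg_left (hAentry x z) (hp0 x)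
        _ = K * (p x * V x) := by ring
    have hsqA : ∀ z, Summable fun x => q x * A x z := by
      intro z
      refine summable_abs_iff.mp ?_
      refine Summable.of_nonneg_of_le (fun x => abs_nonneg _) (fun x => ?_)
        (hsqV.mul_left K)
      rw [abs_mul, abs_of_nonneg (hq0 x)]
      calc q x * |A x z| ≤ q x * (K * V x) :=
            mul_le_mul_of_nonneg_left (hAentry x z) (hq0 x)
        _ = K * (q x * V x) := by ring
    set u : X → ℝ := fun z => ∑' x, p x * A x z with hu
    set w : X → ℝ := fun z => ∑' x, q x * A x z with hw
    have hmA : ∀ z, (∑' x, m x * A x z) = u z - w z := by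
      intro z
      rw [show (fun x => m x * A x z) = (fun x => p x * A x z - q x * A x z) from
        funext (fun x => by rw [← hpq_sub x, sub_mul])]
      exact Summable.tsum_sub (hspA z) (hsqA z)
    -- dominating function on the product space
    set H : X × X → ℝ := fun pr =>
      (p pr.1 * V pr.1) * q pr.2 * K + p pr.1 * (q pr.2 * V pr.2) * K with hH
    have hsH : Summable H := by
      refine Summable.add ?_ ?_
      · exact ((hspV.mul_of_nonneg hsq
          (fun x => mul_nonneg (hp0 x) (hVpos x).le) hq0).mul_right K)
      · exact ((hsp.mul_of_nonneg hsqV hp0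
          (fun x => mul_nonneg (hq0 x) (hVpos x).le)).mul_right K)
    have hGH : ∀ z (pr : X × X),
        p pr.1 * q pr.2 * |A pr.1 z - A pr.2 z| ≤ H pr := by
      intro z pr
      have h1 : |A pr.1 z - A pr.2 z| ≤ K * V pr.1 + K * V pr.2 :=
        le_trans (abs_sub _ _) (add_le_add (hAentry pr.1 z) (hAentry pr.2 z))
      calc p pr.1 * q pr.2 * |A pr.1 z - A pr.2 z|
          ≤ p pr.1 * q pr.2 * (K * V pr.1 + K * V pr.2) :=
            mul_le_mul_of_nonneg_left h1 (mul_nonneg (hp0 _) (hq0 _))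
        _ = H pr := by rw [hH]; ring
    have hGsum : ∀ z, Summable fun pr : X × X =>
        p pr.1 * q pr.2 * |A pr.1 z - A pr.2 z| :=
      fun z => Summable.of_nonneg_of_le
        (fun pr => mul_nonneg (mul_nonneg (hp0 _) (hq0 _)) (abs_nonneg _))
        (hGH z) hsH
    -- full triple summability
    set F : (X × X) → X → ℝ := fun pr z =>
      p pr.1 * q pr.2 * (|A pr.1 z - A pr.2 z| * V z) with hF
    have hFnn : ∀ pr z, 0 ≤ F pr z := fun pr z =>
      mul_nonneg (mul_nonneg (hp0 _) (hq0 _))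
        (mul_nonneg (abs_nonneg _) (hVpos _).le)
    have hFfiber : ∀ pr : X × X, Summable (F pr) := fun pr =>
      (hΔsum pr.1 pr.2).mul_left _
    have hFfibersum : ∀ pr : X × X, (∑' z, F pr z)
        = p pr.1 * q pr.2 * (∑' z, |A pr.1 z - A pr.2 z| * V z) := fun pr =>
      tsum_mul_left
    have hFsumFiber : Summable fun pr : X × X => ∑' z, F pr z := by
      refine Summable.of_nonneg_of_le
        (fun pr => tsum_nonneg (fun z => hFnn pr z)) (fun pr => ?_) hsH
      rw [hFfibersum pr]
      calc p pr.1 * q pr.2 * (∑' z, |A pr.1 z - A pr.2 z| * V z)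
          ≤ p pr.1 * q pr.2 * (K * V pr.1 + K * V pr.2) :=
            mul_le_mul_of_nonneg_left (hΔbound pr.1 pr.2)
              (mul_nonneg (hp0 _) (hq0 _))
        _ = H pr := by rw [hH]; ring
    have hFull : Summable (Function.uncurry F) := by
      refine (summable_prod_of_nonneg ?_).mpr ⟨hFfiber, hFsumFiber⟩
      intro t
      exact hFnn t.1 t.2
    have hFz : ∀ z, Summable fun pr : X × X => F pr z := by
      intro z
      refine ((hGsum z).mul_right (V z)).congr (fun pr => ?_)
      rw [hF]; ring
    have hsB : Summable fun z => ∑' pr : X × X, F pr z := by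
      have h1 := (summable_prod_of_nonneg (f := fun t : X × (X × X) => F t.2 t.1)
        (fun t => hFnn t.2 t.1)).mp (hFull.prod_symm.congr (fun t => rfl))
      exact h1.2
    -- key identity per z
    have hkey : ∀ z, (∑' pr : X × X, p pr.1 * q pr.2 * (A pr.1 z - A pr.2 z))
        = c * (u z - w z) := by
      intro z
      have hsigned : Summable fun pr : X × X =>
          p pr.1 * q pr.2 * (A pr.1 z - A pr.2 z) := by
        refine summable_abs_iff.mp (((hGsum z).congr (fun pr => ?_)))
        rw [abs_mul, abs_of_nonneg (mul_nonneg (hp0 _) (hq0 _))]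
      have hinner : ∀ x, Summable fun y => p x * q y * (A x z - A y z) := by
        intro x
        refine (((hsq.mul_left (p x * A x z)).sub
          ((hsqA z).mul_left (p x)))).congr (fun y => ?_)
        ring
      rw [Summable.tsum_prod' hsigned (fun x => hinner x)]
      have hin : ∀ x, (∑' y, p x * q y * (A x z - A y z))
          = (p x * A x z) * c - p x * w z := by
        intro x
        rw [show (fun y => p x * q y * (A x z - A y z))
          = (fun y => (p x * A x z) * q y - p x * (q y * A y z)) from
          funext (fun y => by ring)]
        rw [Summable.tsum_sub (hsq.mul_left (p x * A x z)) ((hsqA z).mul_left (p x)),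
          tsum_mul_left, tsum_mul_left, hqc]
      rw [tsum_congr hin]
      rw [Summable.tsum_sub ((hspA z).mul_right c) (hsp.mul_right (w z)),
        tsum_mul_right, tsum_mul_right]
      have huz : u z = ∑' x, p x * A x z := rfl
      rw [huz, ← hc]
      ring
    -- per-z bound
    have hz : ∀ z, |∑' x, m x * A x z| * V z ≤ (1 / c) * ∑' pr : X × X, F pr z := by
      intro z
      have hGz : (∑' pr : X × X, F pr z)
          = (∑' pr : X × X, p pr.1 * q pr.2 * |A pr.1 z - A pr.2 z|) * V z := by
        rw [← tsum_mul_right]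
        exact tsum_congr (fun pr => by rw [hF]; ring)
      have habs : c * |u z - w z|
          ≤ ∑' pr : X × X, p pr.1 * q pr.2 * |A pr.1 z - A pr.2 z| := by
        have h1 : |∑' pr : X × X, p pr.1 * q pr.2 * (A pr.1 z - A pr.2 z)|
            ≤ ∑' pr : X × X, |p pr.1 * q pr.2 * (A pr.1 z - A pr.2 z)| := by
          have := norm_tsum_le_tsum_norm (f := fun pr : X × X =>
            p pr.1 * q pr.2 * (A pr.1 z - A pr.2 z)) ?_
          · simpa only [Real.norm_eq_abs] using this
          · refine ((hGsum z).congr (fun pr => ?_))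
            rw [Real.norm_eq_abs, abs_mul, abs_of_nonneg (mul_nonneg (hp0 _) (hq0 _))]
        rw [hkey z, abs_mul, abs_of_nonneg hcpos.le] at h1
        refine le_trans h1 (le_of_eq (tsum_congr (fun pr => ?_)))
        rw [abs_mul, abs_of_nonneg (mul_nonneg (hp0 _) (hq0 _))]
      rw [hmA z, hGz]
      have h2 : |u z - w z| ≤ (1 / c) * ∑' pr : X × X,
          p pr.1 * q pr.2 * |A pr.1 z - A pr.2 z| := by
        calc |u z - w z| = (1 / c) * (c * |u z - w z|) := by field_simp
          _ ≤ (1 / c) * ∑' pr : X × X, p pr.1 * q pr.2 * |A pr.1 z - A pr.2 z| :=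
            mul_le_mul_of_nonneg_left habs (by positivity)
      calc |u z - w z| * V z
          ≤ ((1 / c) * ∑' pr : X × X, p pr.1 * q pr.2 * |A pr.1 z - A pr.2 z|) * V z :=
            mul_le_mul_of_nonneg_right h2 (hVpos z).le
        _ = (1 / c) * ((∑' pr : X × X, p pr.1 * q pr.2 * |A pr.1 z - A pr.2 z|) * V z) := by
            ring
    -- summability of LHS
    have hsLHS : Summable fun z => |∑' x, m x * A x z| * V z :=
      Summable.of_nonneg_of_le
        (fun z => mul_nonneg (abs_nonneg _) (hVpos z).le) hz (hsB.mul_left (1 / c))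
    -- final chain
    have step1 : (∑' z, |∑' x, m x * A x z| * V z)
        ≤ (1 / c) * ∑' z, ∑' pr : X × X, F pr z := by
      rw [← tsum_mul_left]
      exact Summable.tsum_le_tsum hz hsLHS (hsB.mul_left (1 / c))
    have step2 : (∑' z, ∑' pr : X × X, F pr z) = ∑' pr : X × X, ∑' z, F pr z :=
      Summable.tsum_comm' hFull hFfiber hFz
    have step3 : (∑' pr : X × X, ∑' z, F pr z) ≤ c * T := by
      have hRHSsum : Summable fun pr : X × X =>
          ((p pr.1 * V pr.1) * q pr.2 + p pr.1 * (q pr.2 * V pr.2)) * T := by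
        refine Summable.mul_right T (Summable.add ?_ ?_)
        · exact hspV.mul_of_nonneg hsq
            (fun x => mul_nonneg (hp0 x) (hVpos x).le) hq0
        · exact hsp.mul_of_nonneg hsqV hp0
            (fun x => mul_nonneg (hq0 x) (hVpos x).le)
      have h1 : (∑' pr : X × X, ∑' z, F pr z)
          ≤ ∑' pr : X × X, ((p pr.1 * V pr.1) * q pr.2 + p pr.1 * (q pr.2 * V pr.2)) * T := by
        refine Summable.tsum_le_tsum (fun pr => ?_) hFsumFiber hRHSsum
        rw [hFfibersum pr]
        calc p pr.1 * q pr.2 * (∑' z, |A pr.1 z - A pr.2 z| * V z)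
            ≤ p pr.1 * q pr.2 * ((V pr.1 + V pr.2) * T) :=
              mul_le_mul_of_nonneg_left (hΔT pr.1 pr.2) (mul_nonneg (hp0 _) (hq0 _))
          _ = ((p pr.1 * V pr.1) * q pr.2 + p pr.1 * (q pr.2 * V pr.2)) * T := by ring
      have h2 : (∑' pr : X × X, ((p pr.1 * V pr.1) * q pr.2 + p pr.1 * (q pr.2 * V pr.2)) * T)
          = c * T := by
        rw [tsum_mul_right]
        congr 1
        have hs1 : Summable fun pr : X × X => (p pr.1 * V pr.1) * q pr.2 :=
          hspV.mul_of_nonneg hsq (fun x => mul_nonneg (hp0 x) (hVpos x).le) hq0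
        have hs2 : Summable fun pr : X × X => p pr.1 * (q pr.2 * V pr.2) :=
          hsp.mul_of_nonneg hsqV hp0 (fun x => mul_nonneg (hq0 x) (hVpos x).le)
        rw [Summable.tsum_add hs1 hs2]
        have hnpV : Summable fun x => ‖p x * V x‖ :=
          hspV.congr fun x => (Real.norm_of_nonneg (mul_nonneg (hp0 x) (hVpos x).le)).symm
        have hnq : Summable fun y => ‖q y‖ :=
          hsq.congr fun y => (Real.norm_of_nonneg (hq0 y)).symm
        have hnp : Summable fun x => ‖p x‖ :=
          hsp.congr fun x => (Real.norm_of_nonneg (hp0 x)).symm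
        have hnqV : Summable fun y => ‖q y * V y‖ :=
          hsqV.congr fun y => (Real.norm_of_nonneg (mul_nonneg (hq0 y) (hVpos y).le)).symm
        have e1 : (∑' pr : X × X, (p pr.1 * V pr.1) * q pr.2)
            = (∑' x, p x * V x) * ∑' y, q y :=
          (tsum_mul_tsum_of_summable_norm hnpV hnq).symm
        have e2 : (∑' pr : X × X, p pr.1 * (q pr.2 * V pr.2))
            = (∑' x, p x) * ∑' y, q y * V y :=
          (tsum_mul_tsum_of_summable_norm hnp hnqV).symm
        rw [e1, e2, hqc]
        have e3 : (∑' x, p x * V x) + (∑' x, q x * V x) = 1 := by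
          rw [← Summable.tsum_add hspV hsqV, ← hm1]
          exact tsum_congr (fun x => by rw [← hpq_abs x, add_mul])
        rw [← hc]
        nlinarith [e3]
      linarith [h1, h2]
    calc (∑' z, |∑' x, m x * A x z| * V z)
        ≤ (1 / c) * ∑' z, ∑' pr : X × X, F pr z := step1
      _ = (1 / c) * ∑' pr : X × X, ∑' z, F pr z := by rw [step2]
      _ ≤ (1 / c) * (c * T) := by
          refine mul_le_mul_of_nonneg_left step3 (by positivity)
      _ = T := by field_simp
  -- now the two inequalities
  refine le_antisymm (Real.sSup_le hub hTnn) ?_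
  refine ciSup_le fun x => ciSup_le fun y => ?_
  by_cases hxy : x = y
  · subst hxy
    have h0 : (1 / (V x + V x)) * (∑' z, |A x z - A x z| * V z) = 0 := by
      simp [sub_self]
    rw [h0]
    exact Real.sSup_nonneg fun r hr => by
      obtain ⟨m, -, -, rfl⟩ := hr
      exact tsum_nonneg fun z => mul_nonneg (abs_nonneg _) (hVpos _).le
  · have hVV : (0:ℝ) < V x + V y := by linarith [hVpos x, hVpos y]
    set a : ℝ := 1 / (V x + V y) with ha
    have hapos : 0 < a := by positivity
    set m : X → ℝ := fun u => if u = x then a else if u = y then -a else 0 with hm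
    have hmx : m x = a := by simp [hm]
    have hmy : m y = -a := by simp [hm, hxy, Ne.symm hxy]
    have hm_off : ∀ b, b ∉ ({x, y} : Finset X) → m b = 0 := by
      intro b hb
      simp only [Finset.mem_insert, Finset.mem_singleton, not_or] at hb
      simp [hm, hb.1, hb.2]
    have t1 : (∑' u, |m u| * V u) = 1 := by
      rw [tsum_eq_sum (s := {x, y}) (fun b hb => by rw [hm_off b hb]; simp)]
      rw [Finset.sum_pair hxy, hmx, hmy]
      rw [abs_of_pos hapos, abs_neg, abs_of_pos hapos]
      rw [ha]
      field_simp
    have t2 : (∑' u, m u) = 0 := by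
      rw [tsum_eq_sum (s := {x, y}) (fun b hb => hm_off b hb)]
      rw [Finset.sum_pair hxy, hmx, hmy]
      ring
    have t3 : (1 / (V x + V y)) * (∑' z, |A x z - A y z| * V z)
        = ∑' z, |∑' u, m u * A u z| * V z := by
      have hinz : ∀ z, (∑' u, m u * A u z) = a * (A x z - A y z) := by
        intro z
        rw [tsum_eq_sum (s := {x, y}) (fun b hb => by rw [hm_off b hb]; ring)]
        rw [Finset.sum_pair hxy, hmx, hmy]
        ring
      have hterm : ∀ z, |∑' u, m u * A u z| * V z = a * (|A x z - A y z| * V z) := by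
        intro z
        rw [hinz z, abs_mul, abs_of_pos hapos, mul_assoc]
      refine Eq.symm ?_
      rw [tsum_congr hterm, tsum_mul_left, ha]
    exact le_csSup ⟨T, hub⟩ ⟨m, t1, t2, t3⟩
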